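/- Let A, B ∈ 𝒢(Z,C) be nonempty. Then 0⁺A ⊕ 0⁺B = cl co (0⁺A ∪ 0⁺B) and 0⁺A ⊕ 0⁺B ⊆ 0⁺(A ⊕ B). Moreover, if A ⊇ B then 0⁺A ⊇ 0⁺B. -/

import Mathlib

open Set Pointwise

noncomputable section

variable {Z : Type*} [AddCommGroup Z] [Module ℝ Z] [TopologicalSpace Z]

/-- The inf-residual `A ⊖ B = {z : B + {z} ⊆ A}`. -/
def resid (A B : Set Z) : Set Z := {z : Z | B + {z} ⊆ A}

/-- The recession cone `0⁺A`, with the convention `0⁺∅ = ∅`. -/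
def recCone (A : Set Z) : Set Z := {z : Z | A.Nonempty ∧ A + {z} ⊆ A}

/-- `A ⊕ B = cl (A + B)`. -/
def oplus (A B : Set Z) : Set Z := closure (A + B)

/-- Membership in `𝒢(Z,C)`: `A = cl co (A + C)`. -/
def IsG (C A : Set Z) : Prop := A = closure (convexHull ℝ (A + C))

/-- The set `C⁻ \ {0}` of nonzero elements of the negative dual cone. -/
def negDualNZ (C : Set Z) : Set (Z →L[ℝ] ℝ) :=
  {p : Z →L[ℝ] ℝ | (∀ c ∈ C, p c ≤ 0) ∧ p ≠ 0}

/-- `inf {-z*(z) : z ∈ A}` as an extended real. -/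
def scal (p : Z →L[ℝ] ℝ) (A : Set Z) : EReal :=
  sInf ((fun z => ((-(p z) : ℝ) : EReal)) '' A)

/-- Support function `σ(z*|A) = sup {z*(z) : z ∈ A}` as an extended real. -/
def suppF (p : Z →L[ℝ] ℝ) (A : Set Z) : EReal :=
  sSup ((fun z => ((p z : ℝ) : EReal)) '' A)

/-- Inf-residuation on the extended reals: `r ⊖ s = inf {t ∈ ℝ : r ≤ s + t}`. -/
def eresid (r s : EReal) : EReal :=
  sInf ((fun t : ℝ => (t : EReal)) '' {t : ℝ | r ≤ s + (t : EReal)})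

variable {X : Type*} [AddCommGroup X] [Module ℝ X]

/-- The scalarization `φ_{f,z*}(x) = inf {-z*(z) : z ∈ f(x)}`. -/
def phi (f : X → Set Z) (p : Z →L[ℝ] ℝ) (x : X) : EReal := scal p (f x)

/-- Convexity for set-valued functions:
`f(t x₁ + (1-t) x₂) ⊇ cl (t f(x₁) + (1-t) f(x₂))`. -/
def ConvexSV (f : X → Set Z) : Prop :=
  ∀ x₁ x₂ : X, ∀ t : ℝ, t ∈ Ioo (0:ℝ) 1 →
    closure (t • f x₁ + (1 - t) • f x₂) ⊆ f (t • x₁ + (1 - t) • x₂)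

/-- The set-valued directional derivative
`f′(x,u) = ⋂_{t₀>0} cl co ⋃_{0<t<t₀} (1/t)•(f(x+tu) ⊖ f(x))`. -/
def sder (f : X → Set Z) (x u : X) : Set Z :=
  ⋂ t₀ ∈ Ioi (0:ℝ), closure (convexHull ℝ
    (⋃ t ∈ Ioo (0:ℝ) t₀, (1 / t) • resid (f (x + t • u)) (f x)))

/-- The scalar Dini derivative `φ′_{f,z*}(x,u) = inf_{t>0} (1/t)(φ(x+tu) ⊖ φ(x))`. -/
def phiDer (f : X → Set Z) (p : Z →L[ℝ] ℝ) (x u : X) : EReal :=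
  ⨅ t ∈ Ioi (0:ℝ), (((1 / t : ℝ)) : EReal) * eresid (phi f p (x + t • u)) (phi f p x)

end


section myhelpers
variable {Z : Type*} [AddCommGroup Z] [Module ℝ Z] [TopologicalSpace Z]
  [IsTopologicalAddGroup Z] [ContinuousSMul ℝ Z]

lemma mem_recCone_iffX {A : Set Z} {z : Z} :
    z ∈ recCone A ↔ A.Nonempty ∧ ∀ a ∈ A, a + z ∈ A := by
  constructor
  · rintro ⟨hne, h⟩
    exact ⟨hne, fun a ha => h (Set.add_mem_add ha (Set.mem_singleton z))⟩
  · rintro ⟨hne, h⟩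
    refine ⟨hne, ?_⟩
    rintro x ⟨a, ha, w, hw, rfl⟩
    rw [Set.mem_singleton_iff] at hw
    subst hw
    exact h a ha

lemma nsmul_mem_aux {A : Set Z} {z : Z} (hz : ∀ a ∈ A, a + z ∈ A) :
    ∀ (n : ℕ), ∀ a ∈ A, a + (n : ℝ) • z ∈ A := by
  intro n
  induction n with
  | zero => simp
  | succ n ih =>
    intro a ha
    have : a + ((n + 1 : ℕ) : ℝ) • z = (a + (n : ℝ) • z) + z := by
      push_cast
      rw [add_smul, one_smul]
      abel
    rw [this]
    exact hz _ (ih a ha)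

lemma recCone_smul {A : Set Z} (hA : Convex ℝ A) {z : Z} (hz : z ∈ recCone A)
    {r : ℝ} (hr : 0 < r) : r • z ∈ recCone A := by
  rw [mem_recCone_iffX] at hz ⊢
  obtain ⟨hne, hz⟩ := hz
  refine ⟨hne, fun a ha => ?_⟩
  set n : ℕ := ⌈r⌉₊ with hn
  have hrn : r ≤ (n : ℝ) := Nat.le_ceil r
  have hnpos : (0 : ℝ) < n := lt_of_lt_of_le hr hrn
  have hmem := nsmul_mem_aux hz n a ha
  have hc1 : (0:ℝ) ≤ r / n := le_of_lt (div_pos hr hnpos)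
  have hc2 : (0:ℝ) ≤ 1 - r / n := by
    have : r / n ≤ 1 := (div_le_one hnpos).mpr hrn
    linarith
  have key : (1 - r / n) • a + (r / n) • (a + (n : ℝ) • z) = a + r • z := by
    rw [smul_add, smul_smul, div_mul_cancel₀ r hnpos.ne', sub_smul, one_smul]
    abel
  have := hA ha hmem hc2 hc1 (by ring)
  rwa [key] at this

lemma cone_add_eq {K1 K2 : Set Z} (h1c : Convex ℝ K1) (h2c : Convex ℝ K2)
    (h10 : (0:Z) ∈ K1) (h20 : (0:Z) ∈ K2)
    (h1s : ∀ z ∈ K1, ∀ r : ℝ, 0 < r → r • z ∈ K1)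
    (h2s : ∀ z ∈ K2, ∀ r : ℝ, 0 < r → r • z ∈ K2) :
    K1 + K2 = convexHull ℝ (K1 ∪ K2) := by
  apply Set.Subset.antisymm
  · rintro x ⟨a, ha, b, hb, rfl⟩
    have h2a : (2:ℝ) • a ∈ K1 := h1s a ha 2 (by norm_num)
    have h2b : (2:ℝ) • b ∈ K2 := h2s b hb 2 (by norm_num)
    have hma : (2:ℝ) • a ∈ convexHull ℝ (K1 ∪ K2) :=
      subset_convexHull ℝ _ (Or.inl h2a)
    have hmb : (2:ℝ) • b ∈ convexHull ℝ (K1 ∪ K2) :=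
      subset_convexHull ℝ _ (Or.inr h2b)
    have := (convex_convexHull ℝ (K1 ∪ K2)) hma hmb
      (by norm_num : (0:ℝ) ≤ 1/2) (by norm_num : (0:ℝ) ≤ 1/2) (by norm_num)
    have h12 : (1/2 : ℝ) * 2 = 1 := by norm_num
    rw [smul_smul, smul_smul, h12, one_smul, one_smul] at this
    exact this
  · apply convexHull_min
    · rintro x (hx | hx)
      · exact ⟨x, hx, 0, h20, add_zero x⟩
      · exact ⟨0, h10, x, hx, zero_add x⟩
    · exact h1c.add h2c

lemma recCone_isClosed {D : Set Z} (hD : IsClosed D) (hne : D.Nonempty) :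
    IsClosed (recCone D) := by
  have heq : recCone D = ⋂ d ∈ D, (fun z => d + z) ⁻¹' D := by
    ext z
    rw [mem_recCone_iffX]
    simp only [Set.mem_iInter, Set.mem_preimage]
    exact ⟨fun h => h.2, fun h => ⟨hne, h⟩⟩
  rw [heq]
  exact isClosed_biInter fun d _ => hD.preimage (continuous_const.add continuous_id)

lemma recCone_mono' {A B : Set Z} (hAcl : IsClosed A) (hAconv : Convex ℝ A)
    (hBA : B ⊆ A) : recCone B ⊆ recCone A := by
  intro z hz
  rw [mem_recCone_iffX] at hz ⊢
  obtain ⟨⟨b, hb⟩, hz⟩ := hz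
  have hbn : ∀ n : ℕ, b + (n : ℝ) • z ∈ B := by
    intro n
    induction n with
    | zero => simpa using hb
    | succ n ih =>
      have : b + ((n + 1 : ℕ) : ℝ) • z = (b + (n : ℝ) • z) + z := by
        push_cast; rw [add_smul, one_smul]; abel
      rw [this]; exact hz _ ih
  refine ⟨⟨b, hBA hb⟩, fun a ha => ?_⟩
  -- a + z is the limit of (1 - 1/(n+1)) • a + (1/(n+1)) • (b + (n+1) • z) ∈ A
  set f : ℕ → Z := fun n => (1 - 1/((n:ℝ)+1)) • a + (1/((n:ℝ)+1)) • (b + ((n:ℝ)+1) • z)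
  have hfA : ∀ n, f n ∈ A := by
    intro n
    have hn1 : (0:ℝ) < (n:ℝ) + 1 := by positivity
    have hbmem : b + ((n:ℝ)+1) • z ∈ A := by
      have := hbn (n+1)
      push_cast at this
      exact hBA this
    have hc1 : (0:ℝ) ≤ 1/((n:ℝ)+1) := by positivity
    have hc2 : (0:ℝ) ≤ 1 - 1/((n:ℝ)+1) := by
      have : 1/((n:ℝ)+1) ≤ 1 := by
        rw [div_le_one hn1]; linarith
      linarith
    exact hAconv ha hbmem hc2 hc1 (by ring)
  have hfeq : ∀ n, f n = (a + z) + (1/((n:ℝ)+1)) • (b - a) := by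
    intro n
    have hn1 : ((n:ℝ) + 1) ≠ 0 := by positivity
    simp only [f]
    rw [smul_add, smul_smul, one_div_mul_cancel hn1, one_smul, sub_smul, one_smul,
      smul_sub]
    abel
  have htend : Filter.Tendsto f Filter.atTop (nhds (a + z)) := by
    have h1 : Filter.Tendsto (fun n : ℕ => 1/((n:ℝ)+1)) Filter.atTop (nhds 0) :=
      tendsto_one_div_add_atTop_nhds_zero_nat
    have h2 : Filter.Tendsto (fun n : ℕ => (1/((n:ℝ)+1)) • (b - a)) Filter.atTop
        (nhds ((0:ℝ) • (b - a))) := h1.smul_const (b - a)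
    rw [zero_smul] at h2
    have h3 := h2.const_add (a + z)
    rw [add_zero] at h3
    convert h3 using 2 with n
    exact hfeq n
  have : a + z ∈ closure A :=
    mem_closure_of_tendsto htend (Filter.Eventually.of_forall hfA)
  rwa [hAcl.closure_eq] at this

lemma add_mem_recCone_oplus {A B : Set Z} (hAne : A.Nonempty) (hBne : B.Nonempty)
    {z1 z2 : Z} (h1 : z1 ∈ recCone A) (h2 : z2 ∈ recCone B) :
    z1 + z2 ∈ recCone (closure (A + B)) := by
  rw [mem_recCone_iffX] at h1 h2 ⊢
  refine ⟨(hAne.add hBne).closure, fun x hx => ?_⟩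
  have h1' := h1.2
  have h2' := h2.2
  have hsub : (fun y => y + (z1 + z2)) '' (A + B) ⊆ A + B := by
    rintro _ ⟨_, ⟨a, ha, b, hb, rfl⟩, rfl⟩
    exact ⟨a + z1, h1' a ha, b + z2, h2' b hb, add_add_add_comm a z1 b z2⟩
  have : x + (z1 + z2) ∈ (fun y => y + (z1 + z2)) '' closure (A + B) :=
    ⟨x, hx, rfl⟩
  have hcl : (fun y => y + (z1 + z2)) '' closure (A + B) ⊆
      closure ((fun y => y + (z1 + z2)) '' (A + B)) :=
    image_closure_subset_closure_image (continuous_id.add continuous_const)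
  exact closure_mono hsub (hcl this)

end myhelpers

theorem stmt_2
  {Z : Type*} [AddCommGroup Z] [Module ℝ Z] [TopologicalSpace Z]
  [IsTopologicalAddGroup Z] [ContinuousSMul ℝ Z] [LocallyConvexSpace ℝ Z] [T2Space Z]
  (C : Set Z) (hCclosed : IsClosed C) (hCconv : Convex ℝ C)
  (hCcone : ∀ c ∈ C, ∀ r : ℝ, 0 < r → r • c ∈ C) (hC0 : (0:Z) ∈ C)
  (A B : Set Z) (hA : IsG C A) (hB : IsG C B)
  (hAne : A.Nonempty) (hBne : B.Nonempty) :
    oplus (recCone A) (recCone B) = closure (convexHull ℝ (recCone A ∪ recCone B))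
    ∧ oplus (recCone A) (recCone B) ⊆ recCone (oplus A B)
    ∧ (B ⊆ A → recCone B ⊆ recCone A) := by
  -- Basic properties of A and B
  have hAcl : IsClosed A := by rw [hA]; exact isClosed_closure
  have hBcl : IsClosed B := by rw [hB]; exact isClosed_closure
  have hAconv : Convex ℝ A := by
    rw [hA]; exact (convex_convexHull ℝ _).closure
  have hBconv : Convex ℝ B := by
    rw [hB]; exact (convex_convexHull ℝ _).closure
  -- recession cones are convex cones containing 0
  have hKAconv : Convex ℝ (recCone A) := by
    intro z1 h1 z2 h2 s t hs ht hst
    rw [mem_recCone_iffX] at h1 h2 ⊢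
    have hseq : s = 1 - t := by linarith
    subst hseq
    refine ⟨hAne, fun a ha => ?_⟩
    have : a + ((1 - t) • z1 + t • z2) = (1 - t) • (a + z1) + t • (a + z2) := by
      module
    rw [this]
    exact hAconv (h1.2 a ha) (h2.2 a ha) hs ht hst
  have hKBconv : Convex ℝ (recCone B) := by
    intro z1 h1 z2 h2 s t hs ht hst
    rw [mem_recCone_iffX] at h1 h2 ⊢
    refine ⟨hBne, fun a ha => ?_⟩
    have hseq : s = 1 - t := by linarith
    subst hseq
    have : a + ((1 - t) • z1 + t • z2) = (1 - t) • (a + z1) + t • (a + z2) := by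
      module
    rw [this]
    exact hBconv (h1.2 a ha) (h2.2 a ha) hs ht hst
  have hKA0 : (0:Z) ∈ recCone A := by
    rw [mem_recCone_iffX]; exact ⟨hAne, fun a ha => by simpa using ha⟩
  have hKB0 : (0:Z) ∈ recCone B := by
    rw [mem_recCone_iffX]; exact ⟨hBne, fun a ha => by simpa using ha⟩
  have hKAs : ∀ z ∈ recCone A, ∀ r : ℝ, 0 < r → r • z ∈ recCone A :=
    fun z hz r hr => recCone_smul hAconv hz hr
  have hKBs : ∀ z ∈ recCone B, ∀ r : ℝ, 0 < r → r • z ∈ recCone B :=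
    fun z hz r hr => recCone_smul hBconv hz hr
  refine ⟨?_, ?_, ?_⟩
  · -- oplus (recCone A) (recCone B) = closure (convexHull ℝ (recCone A ∪ recCone B))
    unfold oplus
    rw [cone_add_eq hKAconv hKBconv hKA0 hKB0 hKAs hKBs]
  · -- oplus (recCone A) (recCone B) ⊆ recCone (oplus A B)
    unfold oplus
    have hsub : recCone A + recCone B ⊆ recCone (closure (A + B)) := by
      rintro _ ⟨z1, h1, z2, h2, rfl⟩
      exact add_mem_recCone_oplus hAne hBne h1 h2
    have hclosed : IsClosed (recCone (closure (A + B))) :=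
      recCone_isClosed isClosed_closure (hAne.add hBne).closure
    exact closure_minimal hsub hclosed
  · -- monotonicity
    exact fun hBA => recCone_mono' hAcl hAconv hBA
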